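/- Let H = H_A ⊗ H_B ⊗ H_C be a tensor product of finite-dimensional Hilbert spaces and T ⊆ H a subspace. If S₁ ⊆ H_A is δ₁-viable for T and S₂ ⊆ H_B is δ₂-viable for T, then S₁ ⊗ S₂ ⊆ H_A ⊗ H_B is (δ₁+δ₂)-viable for T. -/

import Mathlib

noncomputable section

variable {a b c : ℕ}

/-- The orthogonal projection onto a submodule, as a continuous linear map `E →L[ℂ] E`. -/
def projCLM {E : Type*} [NormedAddCommGroup E] [InnerProductSpace ℂ E] [FiniteDimensional ℂ E]
    (K : Submodule ℂ E) : E →L[ℂ] E :=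
  K.subtypeL.comp (K.orthogonalProjection)

/-- `S ⊆ H_A` (here, a subspace of the whole space) is `δ`-viable for `T` if
`P_T P_{S_ext} P_T ≥ (1-δ) P_T`, where `S_ext` is the extension of `S` to the whole space. -/
def IsViable {E : Type*} [NormedAddCommGroup E] [InnerProductSpace ℂ E] [FiniteDimensional ℂ E]
    (δ : ℝ) (T Sext : Submodule ℂ E) : Prop :=
  ((projCLM T).comp ((projCLM Sext).comp (projCLM T))
      - ((1 - δ : ℝ) : ℂ) • projCLM T).IsPositive

/-- The linear map sending `f : H_A ⊗ H_B ⊗ H_C` (realized as functions on a product index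
set) to its `A`-slice at fixed indices `(j, k)`. -/
def sliceA (j : Fin b) (k : Fin c) :
    EuclideanSpace ℂ (Fin a × Fin b × Fin c) →ₗ[ℂ] EuclideanSpace ℂ (Fin a) where
  toFun f := WithLp.toLp 2 (fun i => f (i, j, k))
  map_add' _ _ := rfl
  map_smul' _ _ := rfl

/-- The linear map sending `f` to its `B`-slice at fixed indices `(i, k)`. -/
def sliceB (i : Fin a) (k : Fin c) :
    EuclideanSpace ℂ (Fin a × Fin b × Fin c) →ₗ[ℂ] EuclideanSpace ℂ (Fin b) where
  toFun f := WithLp.toLp 2 (fun j => f (i, j, k))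
  map_add' _ _ := rfl
  map_smul' _ _ := rfl

/-- The subspace `S₁ ⊗ H_B ⊗ H_C` of `H_A ⊗ H_B ⊗ H_C`: all vectors each of whose
`A`-slices lies in `S₁`. -/
def extA (S₁ : Submodule ℂ (EuclideanSpace ℂ (Fin a))) :
    Submodule ℂ (EuclideanSpace ℂ (Fin a × Fin b × Fin c)) :=
  ⨅ (j : Fin b), ⨅ (k : Fin c), S₁.comap (sliceA j k)

/-- The subspace `H_A ⊗ S₂ ⊗ H_C` of `H_A ⊗ H_B ⊗ H_C`. -/
def extB (S₂ : Submodule ℂ (EuclideanSpace ℂ (Fin b))) :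
    Submodule ℂ (EuclideanSpace ℂ (Fin a × Fin b × Fin c)) :=
  ⨅ (i : Fin a), ⨅ (k : Fin c), S₂.comap (sliceB i k)

section Helpers

open scoped InnerProductSpace ComplexConjugate

variable {E : Type*} [NormedAddCommGroup E] [InnerProductSpace ℂ E] [FiniteDimensional ℂ E]

lemma projCLM_mem (K : Submodule ℂ E) (x : E) : projCLM K x ∈ K :=
  (K.orthogonalProjection x).2

lemma projCLM_eq_self {K : Submodule ℂ E} {x : E} (h : x ∈ K) : projCLM K x = x :=
  K.starProjection_eq_self_iff.mpr h

lemma projCLM_isSelfAdjoint (K : Submodule ℂ E) : IsSelfAdjoint (projCLM K) :=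
  isSelfAdjoint_starProjection K

lemma projCLM_adjoint (K : Submodule ℂ E) :
    ContinuousLinearMap.adjoint (projCLM K) = projCLM K :=
  (projCLM_isSelfAdjoint K).adjoint_eq

lemma projCLM_idem (K : Submodule ℂ E) (x : E) : projCLM K (projCLM K x) = projCLM K x :=
  projCLM_eq_self (projCLM_mem K x)

lemma one_sub_projCLM (K : Submodule ℂ E) : (1 : E →L[ℂ] E) - projCLM K = projCLM Kᗮ := by
  ext x; simp [projCLM, ContinuousLinearMap.comp_apply]

lemma projCLM_inner (K : Submodule ℂ E) (u v : E) :
    ⟪projCLM K u, v⟫_ℂ = ⟪u, projCLM K v⟫_ℂ :=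
  K.inner_starProjection_left_eq_right u v

lemma projCLM_isPositive (K : Submodule ℂ E) : (projCLM K).IsPositive := by
  have h := (ContinuousLinearMap.isPositive_one (E := E)).conj_adjoint (projCLM K)
  rw [projCLM_adjoint] at h
  have heq : projCLM K ∘L (1 : E →L[ℂ] E) ∘L projCLM K = projCLM K := by
    ext x
    simp [ContinuousLinearMap.comp_apply, projCLM_idem]
  rwa [heq] at h

/-- If two orthogonal projections commute, the projection onto the intersection is their
composition. -/
lemma projCLM_inf_of_commute {U V : Submodule ℂ E}
    (hc : projCLM U ∘L projCLM V = projCLM V ∘L projCLM U) :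
    projCLM (U ⊓ V) = projCLM U ∘L projCLM V := by
  ext x
  show projCLM (U ⊓ V) x = projCLM U (projCLM V x)
  have hfun : ∀ y, projCLM U (projCLM V y) = projCLM V (projCLM U y) := fun y => by
    have := ContinuousLinearMap.ext_iff.mp hc y
    simpa using this
  apply Submodule.eq_starProjection_of_mem_of_inner_eq_zero
  · refine ⟨projCLM_mem U _, ?_⟩
    rw [hfun x]
    exact projCLM_mem V _
  · intro w hw
    have hwU : w ∈ U := hw.1
    have hwV : w ∈ V := hw.2
    rw [inner_sub_left, projCLM_inner, projCLM_inner, projCLM_eq_self hwU, projCLM_eq_self hwV,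
      sub_self]

lemma D_isPositive {U V : Submodule ℂ E}
    (hc : projCLM U ∘L projCLM V = projCLM V ∘L projCLM U) :
    ((projCLM U ∘L projCLM V) - projCLM U - projCLM V + 1).IsPositive := by
  have hfun : ∀ y, projCLM U (projCLM V y) = projCLM V (projCLM U y) := fun y => by
    have := ContinuousLinearMap.ext_iff.mp hc y
    simpa using this
  have hR : (projCLM U ∘L projCLM V) - projCLM U - projCLM V + 1
      = projCLM Uᗮ ∘L projCLM Vᗮ ∘L ContinuousLinearMap.adjoint (projCLM Uᗮ) := by
    rw [projCLM_adjoint, ← one_sub_projCLM, ← one_sub_projCLM]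
    ext x
    simp only [ContinuousLinearMap.comp_apply, ContinuousLinearMap.sub_apply,
      ContinuousLinearMap.add_apply, ContinuousLinearMap.one_apply, map_sub, projCLM_idem, hfun]
    abel
  rw [hR]
  exact (projCLM_isPositive Vᗮ).conj_adjoint _

end Helpers

section Slices

open scoped InnerProductSpace ComplexConjugate

lemma euclid_decomp {n : ℕ} (g : EuclideanSpace ℂ (Fin n)) :
    g = ∑ i', g i' • EuclideanSpace.single i' (1 : ℂ) := by
  have := (EuclideanSpace.basisFun (Fin n) ℂ).toBasis.sum_repr g
  simpa [EuclideanSpace.basisFun_apply] using this.symm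

lemma euclid_apply {n : ℕ} (L : EuclideanSpace ℂ (Fin n) →L[ℂ] EuclideanSpace ℂ (Fin n))
    (g : EuclideanSpace ℂ (Fin n)) (i : Fin n) :
    L g i = ∑ i', g i' * L (EuclideanSpace.single i' (1 : ℂ)) i := by
  conv_lhs => rw [euclid_decomp g]
  rw [map_sum]
  rw [show ((∑ i', L (g i' • EuclideanSpace.single i' (1:ℂ))) i)
      = ∑ i', (L (g i' • EuclideanSpace.single i' (1:ℂ))) i by rw [WithLp.ofLp_sum, Finset.sum_apply]]
  simp [map_smul]

lemma inner_sliceA (u w : EuclideanSpace ℂ (Fin a × Fin b × Fin c)) :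
    ⟪u, w⟫_ℂ = ∑ j, ∑ k, ⟪sliceA j k u, sliceA j k w⟫_ℂ := by
  simp only [PiLp.inner_apply, RCLike.inner_apply, Fintype.sum_prod_type, sliceA,
    LinearMap.coe_mk, AddHom.coe_mk]
  rw [Finset.sum_comm]
  exact Finset.sum_congr rfl fun j _ => Finset.sum_comm

lemma inner_sliceB (u w : EuclideanSpace ℂ (Fin a × Fin b × Fin c)) :
    ⟪u, w⟫_ℂ = ∑ i, ∑ k, ⟪sliceB i k u, sliceB i k w⟫_ℂ := by
  simp only [PiLp.inner_apply, RCLike.inner_apply, Fintype.sum_prod_type, sliceB,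
    LinearMap.coe_mk, AddHom.coe_mk]
  exact Finset.sum_congr rfl fun i _ => Finset.sum_comm

/-- Auxiliary: the slice-wise projection of `x` for the `A` factor. -/
def liftedA (S₁ : Submodule ℂ (EuclideanSpace ℂ (Fin a)))
    (x : EuclideanSpace ℂ (Fin a × Fin b × Fin c)) :
    EuclideanSpace ℂ (Fin a × Fin b × Fin c) :=
  WithLp.toLp 2 (fun p : Fin a × Fin b × Fin c => projCLM S₁ (sliceA p.2.1 p.2.2 x) p.1)

/-- Auxiliary: the slice-wise projection of `x` for the `B` factor. -/
def liftedB (S₂ : Submodule ℂ (EuclideanSpace ℂ (Fin b)))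
    (x : EuclideanSpace ℂ (Fin a × Fin b × Fin c)) :
    EuclideanSpace ℂ (Fin a × Fin b × Fin c) :=
  WithLp.toLp 2 (fun p : Fin a × Fin b × Fin c => projCLM S₂ (sliceB p.1 p.2.2 x) p.2.1)

lemma projCLM_extA (S₁ : Submodule ℂ (EuclideanSpace ℂ (Fin a)))
    (x : EuclideanSpace ℂ (Fin a × Fin b × Fin c)) :
    projCLM (extA (b := b) (c := c) S₁) x = liftedA S₁ x := by
  apply Submodule.eq_starProjection_of_mem_of_inner_eq_zero
  · simp only [extA, Submodule.mem_iInf, Submodule.mem_comap]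
    intro j k
    have : sliceA j k (liftedA S₁ x) = projCLM S₁ (sliceA j k x) := rfl
    rw [this]
    exact projCLM_mem _ _
  · intro w hw
    simp only [extA, Submodule.mem_iInf, Submodule.mem_comap] at hw
    rw [inner_sliceA]
    refine Finset.sum_eq_zero fun j _ => Finset.sum_eq_zero fun k _ => ?_
    have hsub : sliceA j k (x - liftedA S₁ x)
        = sliceA j k x - projCLM S₁ (sliceA j k x) := by
      rw [map_sub]
      rfl
    rw [hsub]
    exact Submodule.starProjection_inner_eq_zero _ _ (hw j k)

lemma projCLM_extB (S₂ : Submodule ℂ (EuclideanSpace ℂ (Fin b)))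
    (x : EuclideanSpace ℂ (Fin a × Fin b × Fin c)) :
    projCLM (extB (a := a) (c := c) S₂) x = liftedB S₂ x := by
  apply Submodule.eq_starProjection_of_mem_of_inner_eq_zero
  · simp only [extB, Submodule.mem_iInf, Submodule.mem_comap]
    intro i k
    have : sliceB i k (liftedB S₂ x) = projCLM S₂ (sliceB i k x) := rfl
    rw [this]
    exact projCLM_mem _ _
  · intro w hw
    simp only [extB, Submodule.mem_iInf, Submodule.mem_comap] at hw
    rw [inner_sliceB]
    refine Finset.sum_eq_zero fun i _ => Finset.sum_eq_zero fun k _ => ?_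
    have hsub : sliceB i k (x - liftedB S₂ x)
        = sliceB i k x - projCLM S₂ (sliceB i k x) := by
      rw [map_sub]
      rfl
    rw [hsub]
    exact Submodule.starProjection_inner_eq_zero _ _ (hw i k)

lemma projCLM_ext_commute (S₁ : Submodule ℂ (EuclideanSpace ℂ (Fin a)))
    (S₂ : Submodule ℂ (EuclideanSpace ℂ (Fin b))) :
    projCLM (extA (b := b) (c := c) S₁) ∘L projCLM (extB S₂)
      = projCLM (extB S₂) ∘L projCLM (extA S₁) := by
  refine ContinuousLinearMap.ext fun x => ?_
  show projCLM (extA S₁) (projCLM (extB S₂) x) = projCLM (extB S₂) (projCLM (extA S₁) x)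
  rw [projCLM_extA, projCLM_extB, projCLM_extA, projCLM_extB]
  ext p
  obtain ⟨i, j, k⟩ := p
  show projCLM S₁ (sliceA j k (liftedB S₂ x)) i = projCLM S₂ (sliceB i k (liftedA S₁ x)) j
  have hA : sliceA j k (liftedB S₂ x)
      = (WithLp.toLp 2 (fun i' => projCLM S₂ (sliceB i' k x) j) : EuclideanSpace ℂ (Fin a)) := rfl
  have hB : sliceB i k (liftedA S₁ x)
      = (WithLp.toLp 2 (fun j' => projCLM S₁ (sliceA j' k x) i) : EuclideanSpace ℂ (Fin b)) := rfl
  rw [hA, hB, euclid_apply, euclid_apply]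
  have h1 : ∀ i', projCLM S₂ (sliceB i' k x) j
      = ∑ j', x (i', j', k) * projCLM S₂ (EuclideanSpace.single j' 1) j := fun i' => by
    rw [euclid_apply]
    rfl
  have h2 : ∀ j', projCLM S₁ (sliceA j' k x) i
      = ∑ i', x (i', j', k) * projCLM S₁ (EuclideanSpace.single i' 1) i := fun j' => by
    rw [euclid_apply]
    rfl
  simp only [h1, h2, Finset.sum_mul]
  rw [Finset.sum_comm]
  refine Finset.sum_congr rfl fun i' _ => Finset.sum_congr rfl fun j' _ => by ring

end Slices

/-- **Tensoring viable sets.** If `S₁ ⊆ H_A` is `δ₁`-viable for `T` and `S₂ ⊆ H_B` is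
`δ₂`-viable for `T`, then `S₁ ⊗ S₂` (whose extension is `(S₁ ⊗ H_B ⊗ H_C) ⊓ (H_A ⊗ S₂ ⊗ H_C)`)
is `(δ₁ + δ₂)`-viable for `T`. -/
theorem isViable_tensor (T : Submodule ℂ (EuclideanSpace ℂ (Fin a × Fin b × Fin c)))
    (S₁ : Submodule ℂ (EuclideanSpace ℂ (Fin a)))
    (S₂ : Submodule ℂ (EuclideanSpace ℂ (Fin b)))
    (δ₁ δ₂ : ℝ)
    (h₁ : IsViable δ₁ T (extA S₁)) (h₂ : IsViable δ₂ T (extB S₂)) :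
    IsViable (δ₁ + δ₂) T (extA S₁ ⊓ extB S₂) := by
  unfold IsViable at *
  have hc := projCLM_ext_commute (c := c) S₁ S₂
  let P := projCLM T
  let P₁ := projCLM (extA (b := b) (c := c) S₁)
  let P₂ := projCLM (extB (a := a) (c := c) S₂)
  have hinf : projCLM (extA S₁ ⊓ extB S₂) = P₁ ∘L P₂ := projCLM_inf_of_commute hc
  have hD : ((P₁ ∘L P₂) - P₁ - P₂ + 1).IsPositive := D_isPositive hc
  have hPDP : (P ∘L (((P₁ ∘L P₂) - P₁ - P₂ + 1) ∘L P)).IsPositive := by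
    have h := hD.conj_adjoint (projCLM T)
    rw [projCLM_adjoint] at h
    exact h
  have hsum := (h₁.add h₂).add hPDP
  have hEq : P.comp ((projCLM (extA S₁ ⊓ extB S₂)).comp P)
        - ((1 - (δ₁ + δ₂) : ℝ) : ℂ) • P
      = (P.comp (P₁.comp P) - ((1 - δ₁ : ℝ) : ℂ) • P)
        + (P.comp (P₂.comp P) - ((1 - δ₂ : ℝ) : ℂ) • P)
        + (P ∘L (((P₁ ∘L P₂) - P₁ - P₂ + 1) ∘L P)) := by
    rw [hinf]
    have hcast : ((1 - (δ₁ + δ₂) : ℝ) : ℂ)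
        = ((1 - δ₁ : ℝ) : ℂ) + ((1 - δ₂ : ℝ) : ℂ) - 1 := by push_cast; ring
    refine ContinuousLinearMap.ext fun x => ?_
    simp only [ContinuousLinearMap.comp_apply, ContinuousLinearMap.sub_apply,
      ContinuousLinearMap.add_apply, ContinuousLinearMap.smul_apply,
      ContinuousLinearMap.one_apply, map_sub, map_add, hcast]
    have hPP : P (P x) = P x := projCLM_idem T x
    rw [hPP]
    module
  rw [hEq]
  exact hsum
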